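/- Let k be a field of characteristic p > 2 and let S = k⟨x,y⟩/(yx − xy − (1/2)x²). Then for every integer n ≥ 1, (x+y)^n = ∑_{i=0}^{n} C(n,i) · ((i+1)!/2^i) · x^i y^{n−i} in S. -/

import Mathlib

theorem stmt5 (k : Type*) [Field k] (p : ℕ) (hp : p.Prime) (hp2 : 2 < p) [CharP k p]
    (S : Type*) [Ring S] [Algebra k S] (x y : S)
    (hrel : y * x = x * y + (2 : k)⁻¹ • x ^ 2) (n : ℕ) (hn : 1 ≤ n) :
    (x + y) ^ n =
      ∑ i ∈ Finset.range (n + 1),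
        (((n.choose i : k) * ((i + 1).factorial : k)) / 2 ^ i) • (x ^ i * y ^ (n - i)) := by
  have h2 : (2 : k) ≠ 0 := by
    intro h
    have h2' : ((2:ℕ):k) = 0 := by push_cast; exact h
    have := Nat.le_of_dvd (by norm_num) ((CharP.cast_eq_zero_iff k p 2).mp h2')
    omega
  have key : ∀ i : ℕ, y * x ^ i = x ^ i * y + ((i : k) / 2) • x ^ (i + 1) := by
    intro i
    induction i with
    | zero => simp
    | succ i ih =>
      rw [pow_succ, ← mul_assoc, ih, add_mul, smul_mul_assoc, mul_assoc, hrel, mul_add,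
        ← mul_assoc, ← pow_succ, mul_smul_comm]
      simp only [pow_succ, mul_assoc, pow_zero, one_mul]
      match_scalars
      · ring
      · field_simp; ring
  induction n, hn using Nat.le_induction with
  | base =>
    have h11 : ((1:k)+1)/2 = 1 := by rw [one_add_one_eq_two, div_self h2]
    simp [Finset.sum_range_succ, Nat.factorial, h11, add_comm]
  | succ n hn ih =>
    rw [pow_succ', ih, Finset.mul_sum]
    have hterm : ∀ i ∈ Finset.range (n+1),
        (x + y) * ((((n.choose i : k) * ((i + 1).factorial : k)) / 2 ^ i) • (x ^ i * y ^ (n - i)))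
          = ((((n.choose i : k) * ((i + 1).factorial : k)) / 2 ^ i) * (((i:k)+2)/2))
              • (x ^ (i+1) * y ^ (n - i))
            + (((n.choose i : k) * ((i + 1).factorial : k)) / 2 ^ i)
              • (x ^ i * y ^ (n + 1 - i)) := by
      intro i hi
      rw [Finset.mem_range] at hi
      have hni : n + 1 - i = (n - i) + 1 := by omega
      rw [add_mul, mul_smul_comm, mul_smul_comm, ← mul_assoc x, ← pow_succ', ← mul_assoc y,
        key i, hni]
      simp only [add_mul, smul_add, smul_smul, smul_mul_assoc, pow_succ, mul_assoc, pow_zero,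
        one_mul]
      rw [show y * y ^ (n-i) = y ^ (n-i) * y from
        ((pow_succ' y (n-i)).symm.trans (pow_succ y (n-i)))]
      match_scalars <;> field_simp <;> try ring
    rw [Finset.sum_congr rfl hterm, Finset.sum_add_distrib,
      Finset.sum_range_succ' _ (n+1),
      Finset.sum_range_succ'
        (fun i => (((n.choose i : k) * ((i + 1).factorial : k)) / 2 ^ i)
          • (x ^ i * y ^ (n + 1 - i))) n]
    simp only [Nat.add_sub_add_right, Nat.sub_zero, pow_zero, one_mul]
    have hext : (∑ i ∈ Finset.range n,
        (((n.choose (i+1) : k) * (((i+1) + 1).factorial : k)) / 2 ^ (i+1))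
          • (x ^ (i+1) * y ^ (n - i)))
        = ∑ i ∈ Finset.range (n+1),
        (((n.choose (i+1) : k) * (((i+1) + 1).factorial : k)) / 2 ^ (i+1))
          • (x ^ (i+1) * y ^ (n - i)) := by
      rw [Finset.sum_range_succ, Nat.choose_succ_self]
      simp
    rw [hext, ← add_assoc, ← Finset.sum_add_distrib]
    congr 1
    · refine Finset.sum_congr rfl fun i hi => ?_
      rw [← add_smul]
      congr 1
      rw [Nat.choose_succ_succ]
      push_cast [Nat.factorial_succ]
      field_simp
      ring
    · norm_num [Nat.factorial]
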